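/- If all lower previsions in a nonempty collection Γ with common domain K are coherent, then the lower envelope Q̲(f) := inf_{P̲ ∈ Γ} P̲(f) is also coherent (assuming the infimum is finite for each f ∈ K). -/
import Mathlib


/-- Coherence of a lower prevision `P` with domain `K`. -/
def Coherent {Ω : Type*} [Fintype Ω] (K : Set (Ω → ℝ)) (P : (Ω → ℝ) → ℝ) : Prop :=
  ∀ (n : ℕ) (lam : Fin n → ℝ) (lam0 : ℝ) (f : Fin n → Ω → ℝ) (f0 : Ω → ℝ),
    (∀ i, 0 ≤ lam i) → 0 ≤ lam0 → (∀ i, f i ∈ K) → f0 ∈ K →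
    ∃ ω : Ω, 0 ≤ (∑ i, lam i * (f i ω - P (f i))) - lam0 * (f0 ω - P f0)

theorem lower_envelope_coherent {Ω : Type*} [Fintype Ω] [Nonempty Ω]
    (K : Set (Ω → ℝ)) (Γ : Set ((Ω → ℝ) → ℝ)) (hΓ : Γ.Nonempty)
    (hcoh : ∀ P ∈ Γ, Coherent K P)
    (hbdd : ∀ f ∈ K, BddBelow ((fun P => P f) '' Γ))
    (Q : (Ω → ℝ) → ℝ)
    (hQ : ∀ f ∈ K, Q f = sInf ((fun P => P f) '' Γ)) :
    Coherent K Q := by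
  intro n lam lam0 f f0 hlam hlam0 hf hf0
  set g : Ω → ℝ := fun ω => (∑ i, lam i * (f i ω - Q (f i))) - lam0 * (f0 ω - Q f0) with hg
  -- take the maximizer of g
  obtain ⟨ωm, -, hmax⟩ := Finset.exists_max_image (Finset.univ : Finset Ω) g
    ⟨Classical.arbitrary Ω, Finset.mem_univ _⟩
  refine ⟨ωm, le_of_forall_pos_le_add ?_⟩
  intro ε hε
  have hε' : 0 < ε / (lam0 + 1) := div_pos hε (by linarith)
  -- choose P with P f0 < Q f0 + ε'
  have hne : ((fun P => P f0) '' Γ).Nonempty := hΓ.image _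
  obtain ⟨y, hy, hylt⟩ := Real.lt_sInf_add_pos hne hε'
  obtain ⟨P, hP, rfl⟩ := hy
  have hPf0 : P f0 < Q f0 + ε / (lam0 + 1) := by rw [hQ f0 hf0]; exact hylt
  -- Q (f i) ≤ P (f i)
  have hQle : ∀ i, Q (f i) ≤ P (f i) := by
    intro i
    rw [hQ (f i) (hf i)]
    exact csInf_le (hbdd (f i) (hf i)) ⟨P, hP, rfl⟩
  obtain ⟨ω, hω⟩ := hcoh P hP n lam lam0 f f0 hlam hlam0 hf hf0
  have h1 : (∑ i, lam i * (f i ω - P (f i))) - lam0 * (f0 ω - P f0)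
      ≤ g ω + lam0 * (ε / (lam0 + 1)) := by
    have hsum : ∑ i, lam i * (f i ω - P (f i)) ≤ ∑ i, lam i * (f i ω - Q (f i)) := by
      apply Finset.sum_le_sum
      intro i _
      exact mul_le_mul_of_nonneg_left (by linarith [hQle i]) (hlam i)
    have h2 : lam0 * (f0 ω - Q f0) ≤ lam0 * (f0 ω - P f0) + lam0 * (ε / (lam0 + 1)) := by
      have := mul_le_mul_of_nonneg_left (by linarith : f0 ω - Q f0 ≤ (f0 ω - P f0) + ε / (lam0 + 1)) hlam0
      linarith [this, mul_add lam0 (f0 ω - P f0) (ε / (lam0 + 1))]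
    simp only [hg]
    linarith
  have h3 : lam0 * (ε / (lam0 + 1)) ≤ ε := by
    rw [mul_div_assoc', div_le_iff₀ (by linarith : (0:ℝ) < lam0 + 1)]
    nlinarith
  have := hmax ω (Finset.mem_univ ω)
  calc (0:ℝ) ≤ (∑ i, lam i * (f i ω - P (f i))) - lam0 * (f0 ω - P f0) := hω
    _ ≤ g ω + lam0 * (ε / (lam0 + 1)) := h1
    _ ≤ g ωm + ε := by clear_value g; linarith
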